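/- Let q₁, q₂ > 0, q̄ = q₁ + q₂, let Q be the 2 × 2 matrix with rows (−q₁, q₁) and (q₂, −q₂), and let π = (q₂/q̄, q₁/q̄). Then for all i, j ∈ {1, 2}, the integral D_{ij} = ∫₀^∞ ((exp(tQ))_{ij} − π_j) dt converges and D = (1/q̄²) · [[q₁, −q₁], [−q₂, q₂]]. -/

import Mathlib

open Matrix MeasureTheory

/-- exp of a matrix satisfying `A² = c•A`. -/
lemma exp_of_sq {A : Matrix (Fin 2) (Fin 2) ℝ} {c : ℝ} (hc : c ≠ 0)
    (h : A * A = c • A) :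
    NormedSpace.exp A = 1 + ((Real.exp c - 1) / c) • A := by
  letI : SeminormedRing (Matrix (Fin 2) (Fin 2) ℝ) := Matrix.linftyOpSemiNormedRing
  letI : NormedRing (Matrix (Fin 2) (Fin 2) ℝ) := Matrix.linftyOpNormedRing
  letI : NormedAlgebra ℝ (Matrix (Fin 2) (Fin 2) ℝ) := Matrix.linftyOpNormedAlgebra
  have hpow : ∀ n : ℕ, A ^ (n + 1) = c ^ n • A := by
    intro n
    induction n with
    | zero => simp
    | succ n ih =>
      rw [pow_succ, ih, smul_mul_assoc, h, smul_smul, ← pow_succ]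
  have hsummable : Summable fun n : ℕ => ((Nat.factorial n : ℝ)⁻¹) • A ^ n :=
    NormedSpace.expSeries_summable' (𝕂 := ℝ) A
  simp only [NormedSpace.exp_eq_tsum (𝕂 := ℝ)]
  rw [Summable.tsum_eq_zero_add hsummable]
  have h1 : ∀ n : ℕ, ((Nat.factorial (n + 1) : ℝ)⁻¹) • A ^ (n + 1)
      = ((Nat.factorial (n + 1) : ℝ)⁻¹ * c ^ n) • A := by
    intro n; rw [hpow, smul_smul]
  simp only [h1, pow_zero, Nat.factorial_zero, Nat.cast_one, inv_one, one_smul]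
  have hsum2 : Summable fun n : ℕ => ((Nat.factorial (n + 1) : ℝ)⁻¹ * c ^ n) := by
    have := Real.summable_pow_div_factorial c
    have h2 : Summable fun n : ℕ => c ^ (n + 1) / Nat.factorial (n + 1) :=
      (summable_nat_add_iff 1).2 this
    have h3 : Summable fun n : ℕ => (c ^ (n + 1) / Nat.factorial (n + 1)) * c⁻¹ :=
      h2.mul_right _
    refine h3.congr fun n => ?_
    field_simp [pow_succ]
    ring
  rw [Summable.tsum_smul_const hsum2]
  congr 1
  have key : (∑' n : ℕ, ((Nat.factorial (n + 1) : ℝ)⁻¹ * c ^ n)) * c = Real.exp c - 1 := by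
    have hexp : Real.exp c = ∑' n : ℕ, c ^ n / Nat.factorial n := by
      rw [Real.exp_eq_exp_ℝ, NormedSpace.exp_eq_tsum_div]
    have hsump : Summable fun n : ℕ => c ^ n / Nat.factorial n :=
      Real.summable_pow_div_factorial c
    rw [hexp, Summable.tsum_eq_zero_add hsump]
    simp only [pow_zero, Nat.factorial_zero, Nat.cast_one, div_one]
    rw [add_sub_cancel_left, ← tsum_mul_right]
    congr 1 with n
    rw [pow_succ]
    field_simp
    try ring
  simp only [inv_mul_eq_div] at key ⊢
  congr 1
  rw [eq_div_iff hc]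
  exact key

/-- The deviation matrix of the two-state Markov chain:
`D = (1/q̄²)·[[q₁, −q₁], [−q₂, q₂]]`, where `D_{ij} = ∫₀^∞ (p_{ij}(t) − π_j) dt`. -/
theorem two_state_deviation_matrix
    (q₁ q₂ : ℝ) (hq₁ : 0 < q₁) (hq₂ : 0 < q₂)
    (qb : ℝ) (hqb : qb = q₁ + q₂)
    (Q : Matrix (Fin 2) (Fin 2) ℝ) (hQ : Q = !![-q₁, q₁; q₂, -q₂])
    (π : Fin 2 → ℝ) (hπ : π = ![q₂ / qb, q₁ / qb]) :
    (∀ i j : Fin 2, IntegrableOn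
        (fun t : ℝ => NormedSpace.exp (t • Q) i j - π j) (Set.Ioi 0)) ∧
    (Matrix.of fun i j : Fin 2 =>
        ∫ t in Set.Ioi (0 : ℝ), (NormedSpace.exp (t • Q) i j - π j))
      = (1 / qb ^ 2) • !![q₁, -q₁; -q₂, q₂] := by
  have hqb0 : 0 < qb := by rw [hqb]; linarith
  have hqbne : qb ≠ 0 := ne_of_gt hqb0
  -- Q² = -qb • Q
  have hQsq : Q * Q = (-qb) • Q := by
    subst hQ hqb
    ext i j
    fin_cases i <;> fin_cases j <;>
      simp [Matrix.mul_apply, Fin.sum_univ_two] <;> ring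
  -- key pointwise formula for t > 0
  have key : ∀ t : ℝ, 0 < t → ∀ i j : Fin 2,
      NormedSpace.exp (t • Q) i j - π j
        = Real.exp (-(qb * t)) * ((qb⁻¹) • !![q₁, -q₁; -q₂, q₂]) i j := by
    intro t ht i j
    have hc : -(qb * t) ≠ 0 := neg_ne_zero.mpr (mul_ne_zero hqbne (ne_of_gt ht))
    have hsq : (t • Q) * (t • Q) = (-(qb * t)) • (t • Q) := by
      rw [smul_mul_assoc, Matrix.mul_smul, hQsq, smul_smul, smul_smul, smul_smul]
      congr 1
      ring
    rw [exp_of_sq hc hsq]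
    have htne : t ≠ 0 := ne_of_gt ht
    have hne' : q₁ + q₂ ≠ 0 := by positivity
    subst hπ hQ
    fin_cases i <;> fin_cases j <;>
      simp [Matrix.add_apply, Matrix.smul_apply, Matrix.one_apply, smul_eq_mul, hqb] <;>
      field_simp <;> ring
  -- integrability
  have hint : ∀ i j : Fin 2, IntegrableOn
      (fun t : ℝ => NormedSpace.exp (t • Q) i j - π j) (Set.Ioi 0) := by
    intro i j
    have h1 : IntegrableOn (fun t : ℝ => Real.exp (-qb * t)) (Set.Ioi 0) :=
      exp_neg_integrableOn_Ioi 0 hqb0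
    have h2 : IntegrableOn
        (fun t : ℝ => Real.exp (-(qb * t)) * ((qb⁻¹) • !![q₁, -q₁; -q₂, q₂]) i j)
        (Set.Ioi 0) := by
      simpa [neg_mul, IntegrableOn] using h1.mul_const (((qb⁻¹) • !![q₁, -q₁; -q₂, q₂]) i j)
    exact h2.congr_fun (fun t ht => (key t ht i j).symm) measurableSet_Ioi
  refine ⟨hint, ?_⟩
  -- the exponential integral
  have hexpint : ∫ t in Set.Ioi (0 : ℝ), Real.exp (-(qb * t)) = qb⁻¹ := by
    have hderiv : ∀ x ∈ Set.Ioi (0 : ℝ),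
        HasDerivAt (fun t : ℝ => -(Real.exp (-(qb * t)) / qb)) (Real.exp (-(qb * x))) x := by
      intro x _
      have h1 : HasDerivAt (fun t : ℝ => -(qb * t)) (-qb) x := by
        have := ((hasDerivAt_id x).const_mul qb).neg; simp only [id, mul_one] at this; exact this
      have h2 : HasDerivAt (fun t : ℝ => Real.exp (-(qb * t))) (Real.exp (-(qb * x)) * (-qb)) x :=
        (Real.hasDerivAt_exp _).comp x h1
      have h3 := (h2.div_const qb).neg
      exact h3.congr_deriv (by field_simp)
    have hintexp : IntegrableOn (fun t : ℝ => Real.exp (-(qb * t))) (Set.Ioi 0) := by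
      simpa [neg_mul] using exp_neg_integrableOn_Ioi 0 hqb0
    have htend : Filter.Tendsto (fun t : ℝ => -(Real.exp (-(qb * t)) / qb))
        Filter.atTop (nhds 0) := by
      have h0 : Filter.Tendsto (fun t : ℝ => qb * t) Filter.atTop Filter.atTop :=
        Filter.Tendsto.const_mul_atTop hqb0 Filter.tendsto_id
      have h1 : Filter.Tendsto (fun t : ℝ => -(qb * t)) Filter.atTop Filter.atBot :=
        Filter.tendsto_neg_atTop_atBot.comp h0
      have h2 : Filter.Tendsto (fun t : ℝ => Real.exp (-(qb * t))) Filter.atTop (nhds 0) :=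
        Real.tendsto_exp_atBot.comp h1
      simpa using (h2.div_const qb).neg
    have := MeasureTheory.integral_Ioi_of_hasDerivAt_of_tendsto
      (f := fun t : ℝ => -(Real.exp (-(qb * t)) / qb))
      (f' := fun t : ℝ => Real.exp (-(qb * t)))
      (a := 0) ?_ hderiv hintexp htend
    · rw [this]; simp
    · exact (((Real.continuous_exp.comp (continuous_const.mul continuous_id).neg).div_const qb).neg).continuousWithinAt
  -- compute the integral matrix
  ext i j
  rw [Matrix.of_apply]
  rw [setIntegral_congr_fun measurableSet_Ioi (fun t ht => key t ht i j)]
  rw [integral_mul_const, hexpint]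
  subst hQ
  fin_cases i <;> fin_cases j <;>
    simp [Matrix.smul_apply, smul_eq_mul, one_div, pow_two, mul_inv] <;> ring
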